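/- arXiv:2605.15244 — 4 statements merged into one kernel-verified Lean document; each statement's English description precedes it below -/
import Mathlib

section
/- For every n ∈ ℕ with n ≥ 1 and every ω ∈ ℝ \ {0}, one has the absolutely convergent power-series expansion B̂_n(ω) = ∑_{m=0}^{∞} (-i)^m · ( S₂(m+n, n) / binom(m+n, n) ) · ω^m/m!, i.e. the m-th Maclaurin coefficient of the entire extension of ω ↦ ((1 - e^{-iω})/(iω))^n equals (-i)^m S₂(m+n,n)/(binom(m+n,n)·m!). -/
open Finset

/-- Auxiliary: alternating binomial sum of `j^m` vanishes for `m < n`. -/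
private lemma alt_sum_pow_eq_zero : ∀ m n : ℕ, m < n →
    ∑ j ∈ Finset.range (n + 1), (-1 : ℝ) ^ j * (n.choose j : ℝ) * (j : ℝ) ^ m = 0 := by
  intro m
  induction m using Nat.strong_induction_on with
  | _ m ih =>
    match m with
    | 0 =>
      intro n hmn
      have h := Int.alternating_sum_range_choose_of_ne (show n ≠ 0 by omega)
      have h2 := congrArg (Int.cast : ℤ → ℝ) h
      push_cast at h2
      simpa using h2
    | m + 1 =>
      intro n hmn
      obtain ⟨N, rfl⟩ : ∃ N, n = N + 1 := ⟨n - 1, by omega⟩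
      rw [Finset.sum_range_succ']
      simp only [pow_zero, Nat.cast_zero, one_mul]
      rw [zero_pow (by omega), mul_zero, add_zero]
      have key : ∀ i ∈ Finset.range (N + 1),
          (-1 : ℝ) ^ (i + 1) * (((N + 1).choose (i + 1) : ℕ) : ℝ) * ((i + 1 : ℕ) : ℝ) ^ (m + 1)
            = ∑ k ∈ Finset.range (m + 1),
                (-(N + 1 : ℝ)) * (m.choose k : ℝ) *
                  ((-1 : ℝ) ^ i * (N.choose i : ℝ) * (i : ℝ) ^ k) := by
        intro i _
        have hc : (((N + 1).choose (i + 1) : ℕ) : ℝ) * ((i : ℝ) + 1)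
            = ((N : ℝ) + 1) * (N.choose i : ℝ) := by
          have := (Nat.add_one_mul_choose_eq N i).symm
          exact_mod_cast congrArg (Nat.cast : ℕ → ℝ) this
        have hb : ((i : ℝ) + 1) ^ m
            = ∑ k ∈ Finset.range (m + 1), (i : ℝ) ^ k * (m.choose k : ℝ) := by
          have := add_pow (i : ℝ) 1 m
          simpa using this
        push_cast
        calc (-1 : ℝ) ^ (i + 1) * (((N + 1).choose (i + 1) : ℕ) : ℝ) * ((i : ℝ) + 1) ^ (m + 1)
            = (-1 : ℝ) ^ i * (-1) * ((((N + 1).choose (i + 1) : ℕ) : ℝ) * ((i : ℝ) + 1))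
              * ((i : ℝ) + 1) ^ m := by ring
          _ = (-1 : ℝ) ^ i * (-1) * (((N : ℝ) + 1) * (N.choose i : ℝ))
              * ∑ k ∈ Finset.range (m + 1), (i : ℝ) ^ k * (m.choose k : ℝ) := by rw [hc, hb]
          _ = ∑ k ∈ Finset.range (m + 1),
                (-(N + 1 : ℝ)) * (m.choose k : ℝ) *
                  ((-1 : ℝ) ^ i * (N.choose i : ℝ) * (i : ℝ) ^ k) := by
              rw [Finset.mul_sum]; exact Finset.sum_congr rfl fun k _ => by ring
      rw [Finset.sum_congr rfl key, Finset.sum_comm]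
      refine Finset.sum_eq_zero fun k hk => ?_
      have hk' := Finset.mem_range.mp hk
      rw [← Finset.mul_sum, ih k hk' N (by omega), mul_zero]

/-- Reflection: the `S2`-type sum equals `(-1)^n` times the `j^m`-type sum. -/
private lemma refl_sum (m n : ℕ) :
    ∑ j ∈ Finset.range (n + 1), (-1 : ℝ) ^ j * (n.choose j : ℝ) * ((n - j : ℕ) : ℝ) ^ m
      = (-1 : ℝ) ^ n *
        ∑ j ∈ Finset.range (n + 1), (-1 : ℝ) ^ j * (n.choose j : ℝ) * (j : ℝ) ^ m := by
  have h := Finset.sum_range_reflect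
    (fun j => (-1 : ℝ) ^ j * (n.choose j : ℝ) * ((n - j : ℕ) : ℝ) ^ m) (n + 1)
  rw [← h, Finset.mul_sum]
  refine Finset.sum_congr rfl fun j hj => ?_
  have hjn : j ≤ n := by simpa [Nat.lt_succ_iff] using Finset.mem_range.mp hj
  have h1 : n + 1 - 1 - j = n - j := by omega
  have h2 : n - (n - j) = j := by omega
  have h3 : n.choose (n - j) = n.choose j := Nat.choose_symm hjn
  have h4 : (-1 : ℝ) ^ (n - j) = (-1 : ℝ) ^ n * (-1 : ℝ) ^ j := by
    have key : (-1 : ℝ) ^ (n - j) * (-1 : ℝ) ^ j = (-1 : ℝ) ^ n := by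
      rw [← pow_add, Nat.sub_add_cancel hjn]
    have hsq : ((-1 : ℝ) ^ j) * ((-1 : ℝ) ^ j) = 1 := by
      rw [← pow_add, ← two_mul, pow_mul]; norm_num
    calc (-1 : ℝ) ^ (n - j) = (-1 : ℝ) ^ (n - j) * (((-1 : ℝ) ^ j) * ((-1 : ℝ) ^ j)) := by
          rw [hsq, mul_one]
      _ = ((-1 : ℝ) ^ (n - j) * (-1 : ℝ) ^ j) * (-1 : ℝ) ^ j := by ring
      _ = (-1 : ℝ) ^ n * (-1 : ℝ) ^ j := by rw [key]
  rw [h1, h2, h3, h4]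
  ring

private lemma neg_one_pow_sub_c {j n : ℕ} (h : j ≤ n) :
    (-1 : ℂ) ^ (n - j) = (-1) ^ n * (-1) ^ j := by
  have key : (-1 : ℂ) ^ (n - j) * (-1 : ℂ) ^ j = (-1 : ℂ) ^ n := by
    rw [← pow_add, Nat.sub_add_cancel h]
  have hsq : ((-1 : ℂ) ^ j) * ((-1 : ℂ) ^ j) = 1 := by
    rw [← pow_add, ← two_mul, pow_mul]; norm_num
  calc (-1 : ℂ) ^ (n - j) = (-1 : ℂ) ^ (n - j) * (((-1 : ℂ) ^ j) * ((-1 : ℂ) ^ j)) := by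
        rw [hsq, mul_one]
    _ = ((-1 : ℂ) ^ (n - j) * (-1 : ℂ) ^ j) * (-1 : ℂ) ^ j := by ring
    _ = (-1 : ℂ) ^ n * (-1 : ℂ) ^ j := by rw [key]

/-- The Fourier transform of the cardinal B-spline of order `n`,
`B̂ₙ(ω) = ((1 - e^{-iω})/(iω))^n`. -/
noncomputable def Bhat (n : ℕ) (ω : ℝ) : ℂ :=
  ((1 - Complex.exp (-(Complex.I * ω))) / (Complex.I * ω)) ^ n

/-- The Stirling numbers of the second kind,
`S₂(m,n) = (1/n!) ∑_{j=0}^{n} (-1)^j C(n,j) (n-j)^m`. -/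
noncomputable def S2 (m n : ℕ) : ℝ :=
  (1 / (n.factorial : ℝ)) *
    ∑ j ∈ Finset.range (n + 1), (-1 : ℝ) ^ j * (n.choose j : ℝ) * ((n - j : ℕ) : ℝ) ^ m

private lemma S2_eq_zero {m n : ℕ} (h : m < n) : S2 m n = 0 := by
  unfold S2
  rw [refl_sum, alt_sum_pow_eq_zero m n h]
  ring

private lemma coeff_eq (m n : ℕ) :
    ∑ j ∈ Finset.range (n + 1), (-1 : ℂ) ^ (n - j) * (n.choose j : ℂ) * (j : ℂ) ^ m
      = (((n.factorial : ℝ) * S2 m n : ℝ) : ℂ) := by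
  have hr : ∑ j ∈ Finset.range (n + 1), (-1 : ℝ) ^ (n - j) * (n.choose j : ℝ) * (j : ℝ) ^ m
      = (n.factorial : ℝ) * S2 m n := by
    have hfact : (n.factorial : ℝ) ≠ 0 := Nat.cast_ne_zero.mpr n.factorial_ne_zero
    have hL : ∑ j ∈ Finset.range (n + 1), (-1 : ℝ) ^ (n - j) * (n.choose j : ℝ) * (j : ℝ) ^ m
        = (-1 : ℝ) ^ n * ∑ j ∈ Finset.range (n + 1),
            (-1 : ℝ) ^ j * (n.choose j : ℝ) * (j : ℝ) ^ m := by
      rw [Finset.mul_sum]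
      refine Finset.sum_congr rfl fun j hj => ?_
      have hjn : j ≤ n := by simpa [Nat.lt_succ_iff] using Finset.mem_range.mp hj
      have h4 : (-1 : ℝ) ^ (n - j) = (-1 : ℝ) ^ n * (-1 : ℝ) ^ j := by
        have key : (-1 : ℝ) ^ (n - j) * (-1 : ℝ) ^ j = (-1 : ℝ) ^ n := by
          rw [← pow_add, Nat.sub_add_cancel hjn]
        have hsq : ((-1 : ℝ) ^ j) * ((-1 : ℝ) ^ j) = 1 := by
          rw [← pow_add, ← two_mul, pow_mul]; norm_num
        calc (-1 : ℝ) ^ (n - j) = (-1 : ℝ) ^ (n - j) * (((-1 : ℝ) ^ j) * ((-1 : ℝ) ^ j)) := by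
              rw [hsq, mul_one]
          _ = ((-1 : ℝ) ^ (n - j) * (-1 : ℝ) ^ j) * (-1 : ℝ) ^ j := by ring
          _ = (-1 : ℝ) ^ n * (-1 : ℝ) ^ j := by rw [key]
      rw [h4]; ring
    rw [hL]
    unfold S2
    rw [refl_sum]
    field_simp
  rw [← hr]
  push_cast
  rfl

private lemma exp_sub_one_pow (n : ℕ) (z : ℂ) :
    (Complex.exp z - 1) ^ n
      = ∑' m : ℕ, (((n.factorial : ℝ) * S2 m n : ℝ) : ℂ) * z ^ m / (m.factorial : ℂ) := by
  have hexp : ∀ w : ℂ, Complex.exp w = ∑' m : ℕ, w ^ m / (m.factorial : ℂ) := fun w => by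
    rw [Complex.exp_eq_exp_ℂ, NormedSpace.exp_eq_tsum_div]
  have hsum : ∀ j : ℕ, Summable fun m : ℕ =>
      (-1 : ℂ) ^ (n - j) * (n.choose j : ℂ) * (((j : ℂ) * z) ^ m / (m.factorial : ℂ)) :=
    fun j => (NormedSpace.expSeries_div_summable ((j : ℂ) * z)).mul_left _
  calc (Complex.exp z - 1) ^ n
      = ∑ j ∈ Finset.range (n + 1),
          Complex.exp z ^ j * (-1 : ℂ) ^ (n - j) * (n.choose j : ℂ) := by
        simpa [sub_eq_add_neg] using add_pow (Complex.exp z) (-1 : ℂ) n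
    _ = ∑ j ∈ Finset.range (n + 1), ∑' m : ℕ,
          (-1 : ℂ) ^ (n - j) * (n.choose j : ℂ) * (((j : ℂ) * z) ^ m / (m.factorial : ℂ)) := by
        refine Finset.sum_congr rfl fun j _ => ?_
        rw [← Complex.exp_nat_mul, hexp ((j : ℂ) * z)]
        rw [show (∑' (m : ℕ), ((j : ℂ) * z) ^ m / (m.factorial : ℂ)) * (-1 : ℂ) ^ (n - j) *
              (n.choose j : ℂ)
            = ((-1 : ℂ) ^ (n - j) * (n.choose j : ℂ)) *
              ∑' (m : ℕ), ((j : ℂ) * z) ^ m / (m.factorial : ℂ) from by ring]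
        rw [← tsum_mul_left]
    _ = ∑' m : ℕ, ∑ j ∈ Finset.range (n + 1),
          (-1 : ℂ) ^ (n - j) * (n.choose j : ℂ) * (((j : ℂ) * z) ^ m / (m.factorial : ℂ)) :=
        (Summable.tsum_finsetSum fun j _ => hsum j).symm
    _ = ∑' m : ℕ, (((n.factorial : ℝ) * S2 m n : ℝ) : ℂ) * z ^ m / (m.factorial : ℂ) := by
        refine tsum_congr fun m => ?_
        rw [← coeff_eq m n, Finset.sum_mul, Finset.sum_div]
        refine Finset.sum_congr rfl fun j _ => ?_
        rw [mul_pow]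
        ring

/-- For `n ≥ 1` and real `ω ≠ 0`, one has the absolutely convergent expansion
`B̂ₙ(ω) = ∑ₘ (-i)^m (S₂(m+n,n)/C(m+n,n)) ω^m/m!`. -/
theorem stmt2 (n : ℕ) (hn : 1 ≤ n) (ω : ℝ) (hω : ω ≠ 0) :
    Summable (fun m : ℕ => ‖(-Complex.I) ^ m *
        ((S2 (m + n) n / ((m + n).choose n : ℝ) : ℝ) : ℂ) * (ω : ℂ) ^ m /
        (m.factorial : ℂ)‖) ∧
    Bhat n ω = ∑' m : ℕ, (-Complex.I) ^ m *
        ((S2 (m + n) n / ((m + n).choose n : ℝ) : ℝ) : ℂ) * (ω : ℂ) ^ m /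
        (m.factorial : ℂ) := by
  have hIω : Complex.I * (ω : ℂ) ≠ 0 :=
    mul_ne_zero Complex.I_ne_zero (Complex.ofReal_ne_zero.mpr hω)
  set z : ℂ := -(Complex.I * (ω : ℂ)) with hzdef
  have hz : z ≠ 0 := neg_ne_zero.mpr hIω
  -- Summability
  have hsummable : Summable (fun m : ℕ => ‖(-Complex.I) ^ m *
      ((S2 (m + n) n / ((m + n).choose n : ℝ) : ℝ) : ℂ) * (ω : ℂ) ^ m /
      (m.factorial : ℂ)‖) := by
    refine Summable.of_nonneg_of_le (fun m => norm_nonneg _) (fun m => ?_)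
      ((Real.summable_pow_div_factorial ((n : ℝ) * |ω|)).mul_left
        ((2 : ℝ) ^ n * (n : ℝ) ^ n / (n.factorial : ℝ)))
    have hC1 : (1 : ℝ) ≤ ((m + n).choose n : ℝ) := by
      exact_mod_cast Nat.one_le_iff_ne_zero.mpr (Nat.choose_pos (by omega)).ne'
    have hnorm : ‖(-Complex.I) ^ m *
        ((S2 (m + n) n / ((m + n).choose n : ℝ) : ℝ) : ℂ) * (ω : ℂ) ^ m /
        (m.factorial : ℂ)‖
        = |S2 (m + n) n / ((m + n).choose n : ℝ)| * |ω| ^ m / (m.factorial : ℝ) := by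
      rw [norm_div, norm_mul, norm_mul, norm_pow, norm_pow, norm_neg, Complex.norm_I,
        one_pow, one_mul, Complex.norm_real, Complex.norm_real, Real.norm_eq_abs,
        Real.norm_eq_abs, Complex.norm_natCast]
    rw [hnorm]
    have hS2 : |S2 (m + n) n| ≤ (2 : ℝ) ^ n * (n : ℝ) ^ (m + n) / (n.factorial : ℝ) := by
      unfold S2
      rw [abs_mul]
      have h1 : |1 / (n.factorial : ℝ)| = 1 / (n.factorial : ℝ) := by
        rw [abs_of_pos]; positivity
      rw [h1]
      have h2 : |∑ j ∈ Finset.range (n + 1),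
          (-1 : ℝ) ^ j * (n.choose j : ℝ) * ((n - j : ℕ) : ℝ) ^ (m + n)|
          ≤ (2 : ℝ) ^ n * (n : ℝ) ^ (m + n) := by
        calc |∑ j ∈ Finset.range (n + 1),
            (-1 : ℝ) ^ j * (n.choose j : ℝ) * ((n - j : ℕ) : ℝ) ^ (m + n)|
            ≤ ∑ j ∈ Finset.range (n + 1),
              |(-1 : ℝ) ^ j * (n.choose j : ℝ) * ((n - j : ℕ) : ℝ) ^ (m + n)| :=
              Finset.abs_sum_le_sum_abs _ _
          _ ≤ ∑ j ∈ Finset.range (n + 1), (n.choose j : ℝ) * (n : ℝ) ^ (m + n) := by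
              refine Finset.sum_le_sum fun j _ => ?_
              rw [abs_mul, abs_mul, abs_pow, abs_neg, abs_one, one_pow, one_mul,
                Nat.abs_cast, abs_pow, Nat.abs_cast]
              refine mul_le_mul_of_nonneg_left ?_ (Nat.cast_nonneg _)
              exact pow_le_pow_left₀ (Nat.cast_nonneg _) (Nat.cast_le.mpr (Nat.sub_le n j)) _
          _ = (2 : ℝ) ^ n * (n : ℝ) ^ (m + n) := by
              rw [← Finset.sum_mul]
              congr 1
              exact_mod_cast congrArg (Nat.cast : ℕ → ℝ) (Nat.sum_range_choose n)
      calc 1 / (n.factorial : ℝ) * |∑ j ∈ Finset.range (n + 1),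
            (-1 : ℝ) ^ j * (n.choose j : ℝ) * ((n - j : ℕ) : ℝ) ^ (m + n)|
          ≤ 1 / (n.factorial : ℝ) * ((2 : ℝ) ^ n * (n : ℝ) ^ (m + n)) := by
            refine mul_le_mul_of_nonneg_left h2 (by positivity)
        _ = (2 : ℝ) ^ n * (n : ℝ) ^ (m + n) / (n.factorial : ℝ) := by ring
    have habs : |S2 (m + n) n / ((m + n).choose n : ℝ)| ≤ |S2 (m + n) n| := by
      rw [abs_div, abs_of_pos (by positivity : (0:ℝ) < ((m + n).choose n : ℝ))]
      exact div_le_self (abs_nonneg _) hC1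
    calc |S2 (m + n) n / ((m + n).choose n : ℝ)| * |ω| ^ m / (m.factorial : ℝ)
        ≤ ((2 : ℝ) ^ n * (n : ℝ) ^ (m + n) / (n.factorial : ℝ)) * |ω| ^ m /
            (m.factorial : ℝ) := by
          have := habs.trans hS2
          have hpos : (0 : ℝ) ≤ |ω| ^ m / (m.factorial : ℝ) := by positivity
          calc |S2 (m + n) n / ((m + n).choose n : ℝ)| * |ω| ^ m / (m.factorial : ℝ)
              = |S2 (m + n) n / ((m + n).choose n : ℝ)| * (|ω| ^ m / (m.factorial : ℝ)) := by
                ring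
            _ ≤ ((2 : ℝ) ^ n * (n : ℝ) ^ (m + n) / (n.factorial : ℝ)) *
                (|ω| ^ m / (m.factorial : ℝ)) :=
                mul_le_mul_of_nonneg_right (this.trans_eq rfl |>.trans (le_refl _) |>.trans
                  (le_refl _)) hpos
            _ = ((2 : ℝ) ^ n * (n : ℝ) ^ (m + n) / (n.factorial : ℝ)) * |ω| ^ m /
                (m.factorial : ℝ) := by ring
      _ = (2 : ℝ) ^ n * (n : ℝ) ^ n / (n.factorial : ℝ) *
            (((n : ℝ) * |ω|) ^ m / (m.factorial : ℝ)) := by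
          rw [pow_add, mul_pow]; ring
  refine ⟨hsummable, ?_⟩
  -- Equality
  have h1 : Bhat n ω = (Complex.exp z - 1) ^ n / z ^ n := by
    unfold Bhat
    rw [← div_pow]
    congr 1
    rw [div_eq_div_iff hIω hz, hzdef]
    ring
  have h2 := exp_sub_one_pow n z
  have h3 : (∑' m : ℕ, (((n.factorial : ℝ) * S2 m n : ℝ) : ℂ) * z ^ m / (m.factorial : ℂ))
      = ∑' m : ℕ, (((n.factorial : ℝ) * S2 (m + n) n : ℝ) : ℂ) * z ^ (m + n) /
          ((m + n).factorial : ℂ) := by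
    refine (Function.Injective.tsum_eq (g := fun m : ℕ => m + n)
      (fun a b h => by exact add_right_cancel h) ?_).symm
    intro x hx
    simp only [Function.mem_support] at hx
    rcases lt_or_ge x n with hlt | hge
    · exact absurd (by rw [S2_eq_zero hlt]; simp) hx
    · exact ⟨x - n, show x - n + n = x by omega⟩
  have h4 : ∀ m : ℕ, (((n.factorial : ℝ) * S2 (m + n) n : ℝ) : ℂ) * z ^ (m + n) /
      ((m + n).factorial : ℂ)
      = z ^ n * ((-Complex.I) ^ m *
        ((S2 (m + n) n / ((m + n).choose n : ℝ) : ℝ) : ℂ) * (ω : ℂ) ^ m /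
        (m.factorial : ℂ)) := by
    intro m
    have hnat : (((m + n).choose n : ℂ) * (m.factorial : ℂ)) * (n.factorial : ℂ)
        = ((m + n).factorial : ℂ) := by
      exact_mod_cast Nat.add_choose_mul_factorial_mul_factorial m n
    have hzm : z ^ m = (-Complex.I) ^ m * (ω : ℂ) ^ m := by
      rw [hzdef, ← mul_pow]; ring_nf
    have hC : ((m + n).choose n : ℂ) ≠ 0 := by
      exact_mod_cast (Nat.choose_pos (show n ≤ m + n by omega)).ne'
    have hmf : ((m.factorial : ℕ) : ℂ) ≠ 0 := Nat.cast_ne_zero.mpr m.factorial_ne_zero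
    have hmnf : (((m + n).factorial : ℕ) : ℂ) ≠ 0 :=
      Nat.cast_ne_zero.mpr (m + n).factorial_ne_zero
    rw [pow_add, hzm]
    push_cast
    field_simp
    linear_combination (S2 (m + n) n : ℂ) * (ω : ℂ) ^ m * hnat
  rw [h1, h2, h3, tsum_congr h4, tsum_mul_left, mul_comm (z ^ n), mul_div_assoc,
    div_self (pow_ne_zero n hz), mul_one]
end

section
/- For every n ∈ ℕ with n ≥ 1 and every complex z ≠ 0, one has the absolutely convergent expansion ((e^z - 1)/z)^n = ∑_{m=0}^{∞} ( S₂(m+n, n) / binom(m+n, n) ) · z^m/m!. Equivalently, the Bernoulli numbers of order -n, defined as the Maclaurin coefficients B_m^{(-n)} of ((e^z-1)/z)^n via ((e^z-1)/z)^n = ∑_m B_m^{(-n)} z^m/m!, satisfy B_m^{(-n)} = S₂(m+n,n)/binom(m+n,n). -/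
open Finset

/-- The alternating binomial sum `∑_{j=0}^{n} (-1)^j C(n,j) (n-j)^k`, equal to `n! S₂(k,n)`. -/
noncomputable def Acoef (n k : ℕ) : ℝ :=
  ∑ j ∈ range (n + 1), (-1 : ℝ) ^ j * (n.choose j : ℝ) * ((n - j : ℕ) : ℝ) ^ k

lemma Acoef_reflect (n k : ℕ) :
    Acoef n k = ∑ i ∈ range (n + 1), (-1 : ℝ) ^ (n - i) * (n.choose i : ℝ) * (i : ℝ) ^ k := by
  rw [Acoef, ← Finset.sum_range_reflect]
  refine Finset.sum_congr rfl fun j hj => ?_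
  have hj' : j ≤ n := Nat.lt_succ_iff.mp (Finset.mem_range.mp hj)
  rw [show n + 1 - 1 - j = n - j from rfl, Nat.sub_sub_self hj', Nat.choose_symm hj']

lemma Acoef_eq_zero {n k : ℕ} (hk : k < n) : Acoef n k = 0 := by
  have hdvd : (PowerSeries.X : PowerSeries ℝ) ^ n ∣ (PowerSeries.exp ℝ - 1) ^ n :=
    pow_dvd_pow_of_dvd (by rw [PowerSeries.X_dvd_iff]; simp) n
  have h0 := PowerSeries.X_pow_dvd_iff.mp hdvd k hk
  have hexpand : (PowerSeries.exp ℝ - 1) ^ n =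
      ∑ i ∈ range (n + 1),
        PowerSeries.C (R := ℝ) ((-1 : ℝ) ^ (n - i) * (n.choose i : ℝ)) * PowerSeries.exp ℝ ^ i := by
    rw [sub_eq_add_neg, add_pow]
    refine Finset.sum_congr rfl fun i _ => ?_
    simp only [map_mul, map_pow, map_neg, map_one, map_natCast]
    ring
  rw [hexpand, map_sum] at h0
  have hterm : ∀ i, (PowerSeries.coeff (R := ℝ) k)
      (PowerSeries.C (R := ℝ) ((-1 : ℝ) ^ (n - i) * (n.choose i : ℝ)) * PowerSeries.exp ℝ ^ i) =
      (-1 : ℝ) ^ (n - i) * (n.choose i : ℝ) * (i : ℝ) ^ k * (1 / k.factorial : ℝ) := by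
    intro i
    rw [PowerSeries.coeff_C_mul, PowerSeries.exp_pow_eq_rescale_exp, PowerSeries.coeff_rescale,
      PowerSeries.coeff_exp]
    push_cast
    ring
  rw [Finset.sum_congr rfl fun i _ => hterm i, ← Finset.sum_mul] at h0
  have hk' : (1 / (k.factorial : ℝ)) ≠ 0 := by positivity
  rw [Acoef_reflect]
  exact (mul_eq_zero.mp h0).resolve_right hk'

lemma key (n : ℕ) (z : ℂ) (hz : z ≠ 0) :
    HasSum (fun m : ℕ => ((Acoef n (m + n) : ℝ) : ℂ) * z ^ m / ((m + n).factorial : ℂ))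
      (((Complex.exp z - 1) / z) ^ n) := by
  have h1 : ∀ w : ℂ, HasSum (fun k : ℕ => w ^ k / (k.factorial : ℂ)) (Complex.exp w) := by
    intro w
    rw [Complex.exp_eq_exp_ℂ]
    exact NormedSpace.expSeries_div_hasSum_exp w
  have h2 : HasSum
      (fun k : ℕ => ∑ i ∈ range (n + 1),
        (-1 : ℂ) ^ (n - i) * (n.choose i : ℂ) * (((i : ℂ) * z) ^ k / (k.factorial : ℂ)))
      (∑ i ∈ range (n + 1),
        (-1 : ℂ) ^ (n - i) * (n.choose i : ℂ) * Complex.exp ((i : ℂ) * z)) :=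
    hasSum_sum fun i _ => (h1 ((i : ℂ) * z)).mul_left _
  have h3 : (∑ i ∈ range (n + 1),
        (-1 : ℂ) ^ (n - i) * (n.choose i : ℂ) * Complex.exp ((i : ℂ) * z)) =
      (Complex.exp z - 1) ^ n := by
    rw [sub_eq_add_neg, add_pow]
    exact Finset.sum_congr rfl fun i _ => by rw [Complex.exp_nat_mul]; ring
  have h4 : (fun k : ℕ => ((Acoef n k : ℝ) : ℂ) * z ^ k / (k.factorial : ℂ)) =
      (fun k : ℕ => ∑ i ∈ range (n + 1),
        (-1 : ℂ) ^ (n - i) * (n.choose i : ℂ) * (((i : ℂ) * z) ^ k / (k.factorial : ℂ))) := by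
    funext k
    rw [Acoef_reflect]
    push_cast
    rw [Finset.sum_mul, Finset.sum_div]
    exact Finset.sum_congr rfl fun i _ => by rw [mul_pow]; ring
  rw [h3] at h2
  rw [← h4] at h2
  have hzero : ∑ k ∈ range n, ((Acoef n k : ℝ) : ℂ) * z ^ k / (k.factorial : ℂ) = 0 :=
    Finset.sum_eq_zero fun k hk => by
      rw [Acoef_eq_zero (Finset.mem_range.mp hk)]; simp
  have h2' : HasSum (fun k : ℕ => ((Acoef n k : ℝ) : ℂ) * z ^ k / (k.factorial : ℂ))
      ((Complex.exp z - 1) ^ n +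
        ∑ k ∈ range n, ((Acoef n k : ℝ) : ℂ) * z ^ k / (k.factorial : ℂ)) := by
    rw [hzero, add_zero]; exact h2
  have h5 : HasSum (fun m : ℕ => ((Acoef n (m + n) : ℝ) : ℂ) * z ^ (m + n) / ((m + n).factorial : ℂ))
      ((Complex.exp z - 1) ^ n) := (hasSum_nat_add_iff n).mpr h2'
  have h6 : (fun m : ℕ => ((Acoef n (m + n) : ℝ) : ℂ) * z ^ (m + n) / ((m + n).factorial : ℂ)) =
      (fun m : ℕ => (((Acoef n (m + n) : ℝ) : ℂ) * z ^ m / ((m + n).factorial : ℂ)) * z ^ n) := by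
    funext m
    rw [pow_add]
    ring
  rw [h6] at h5
  have h7 : (Complex.exp z - 1) ^ n = ((Complex.exp z - 1) / z) ^ n * z ^ n := by
    rw [div_pow, div_mul_cancel₀]
    exact pow_ne_zero n hz
  rw [h7] at h5
  exact (hasSum_mul_right_iff (pow_ne_zero n hz)).mp h5

lemma coeffs_zero (c : ℕ → ℂ) (h : ∀ z : ℂ, z ≠ 0 → HasSum (fun k : ℕ => c k * z ^ k) 0) :
    ∀ m, c m = 0 := by
  set p : FormalMultilinearSeries ℂ ℂ ℂ :=
    fun k => ContinuousMultilinearMap.mkPiRing ℂ (Fin k) (c k) with hp_def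
  have hcoeff : ∀ k, p.coeff k = c k := by
    intro k
    simp [hp_def, FormalMultilinearSeries.coeff]
  set F : ℂ → ℂ := fun z => ∑' k : ℕ, c k * z ^ k with hF_def
  have hF0 : HasSum (fun k : ℕ => c k * (0 : ℂ) ^ k) (c 0) := by
    convert hasSum_single (f := fun k : ℕ => c k * (0 : ℂ) ^ k) 0 ?_ using 1
    · simp
    · intro b hb
      simp [zero_pow hb]
  have hp : HasFPowerSeriesAt F p 0 := by
    rw [hasFPowerSeriesAt_iff]
    filter_upwards with z
    have : (fun n : ℕ => z ^ n • p.coeff n) = fun n : ℕ => c n * z ^ n := by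
      funext k; rw [hcoeff]; simp [mul_comm]
    rw [this]
    by_cases hz : z = 0
    · subst hz
      have : F (0 + 0) = c 0 := by
        simpa [hF_def] using hF0.tsum_eq
      rw [this]
      simpa using hF0
    · have := h z hz
      rw [show F (0 + z) = 0 by simpa [hF_def] using this.tsum_eq]
      exact this
  rcases hp.analyticAt.eventually_eq_zero_or_eventually_ne_zero with h0 | h1
  · have hz : HasFPowerSeriesAt 0 p 0 := hp.congr h0
    have := hz.eq_zero
    intro m
    rw [← hcoeff m, this]
    simp [FormalMultilinearSeries.coeff]
  · exfalso
    have h2 : ∀ᶠ z in nhdsWithin (0 : ℂ) {(0 : ℂ)}ᶜ, F z = 0 := by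
      filter_upwards [self_mem_nhdsWithin] with z hz
      simpa [hF_def] using (h z hz).tsum_eq
    obtain ⟨z, hne, heq⟩ := (h1.and h2).exists
    exact hne heq

lemma S2_div (n m : ℕ) :
    S2 (m + n) n / ((m + n).choose n : ℝ) =
      Acoef n (m + n) * (m.factorial : ℝ) / ((m + n).factorial : ℝ) := by
  have hnat := Nat.choose_mul_factorial_mul_factorial (Nat.le_add_left n m)
  rw [Nat.add_sub_cancel] at hnat
  have hc : ((m + n).choose n : ℝ) * (n.factorial : ℝ) * (m.factorial : ℝ)
      = ((m + n).factorial : ℝ) := by exact_mod_cast hnat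
  have hS : S2 (m + n) n = 1 / (n.factorial : ℝ) * Acoef n (m + n) := rfl
  have h1 : (n.factorial : ℝ) ≠ 0 := Nat.cast_ne_zero.mpr n.factorial_ne_zero
  have h2 : (m.factorial : ℝ) ≠ 0 := Nat.cast_ne_zero.mpr m.factorial_ne_zero
  have h3 : ((m + n).choose n : ℝ) ≠ 0 :=
    Nat.cast_ne_zero.mpr (Nat.choose_pos (Nat.le_add_left n m)).ne'
  rw [hS, ← hc]
  field_simp

lemma summable_norm_key (n : ℕ) (z : ℂ) :
    Summable (fun m : ℕ => ‖((Acoef n (m + n) : ℝ) : ℂ) * z ^ m / ((m + n).factorial : ℂ)‖) := by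
  refine Summable.of_nonneg_of_le (fun m => norm_nonneg _) (fun m => ?_)
    ((Real.summable_pow_div_factorial ((n : ℝ) * ‖z‖)).mul_left ((2 : ℝ) ^ n * (n : ℝ) ^ n))
  have hsum : (∑ j ∈ range (n + 1), (n.choose j : ℝ)) = 2 ^ n := by
    rw [← Nat.cast_sum, Nat.sum_range_choose]
    push_cast
    ring
  have hA : |Acoef n (m + n)| ≤ 2 ^ n * (n : ℝ) ^ (m + n) := by
    calc |Acoef n (m + n)|
        ≤ ∑ j ∈ range (n + 1), |(-1 : ℝ) ^ j * (n.choose j : ℝ) * ((n - j : ℕ) : ℝ) ^ (m + n)| :=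
          Finset.abs_sum_le_sum_abs _ _
      _ ≤ ∑ j ∈ range (n + 1), (n.choose j : ℝ) * (n : ℝ) ^ (m + n) := by
          refine Finset.sum_le_sum fun j hj => ?_
          simp only [abs_mul, abs_pow, abs_neg, abs_one, one_pow, one_mul, Nat.abs_cast]
          gcongr
          exact_mod_cast Nat.sub_le n j
      _ = (∑ j ∈ range (n + 1), (n.choose j : ℝ)) * (n : ℝ) ^ (m + n) := by
          rw [Finset.sum_mul]
      _ = 2 ^ n * (n : ℝ) ^ (m + n) := by rw [hsum]
  have hnorm : ‖((Acoef n (m + n) : ℝ) : ℂ) * z ^ m / ((m + n).factorial : ℂ)‖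
      = |Acoef n (m + n)| * ‖z‖ ^ m / ((m + n).factorial : ℝ) := by
    rw [norm_div, norm_mul, Complex.norm_real, norm_pow, Complex.norm_natCast, Real.norm_eq_abs]
  rw [hnorm]
  have hfac : (m.factorial : ℝ) ≤ ((m + n).factorial : ℝ) := by
    exact_mod_cast Nat.factorial_le (Nat.le_add_right m n)
  have hrhs : (2 : ℝ) ^ n * (n : ℝ) ^ n * (((n : ℝ) * ‖z‖) ^ m / (m.factorial : ℝ))
      = 2 ^ n * (n : ℝ) ^ (m + n) * ‖z‖ ^ m / (m.factorial : ℝ) := by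
    rw [mul_pow, pow_add]
    ring
  rw [hrhs]
  gcongr

/-- For `n ≥ 1` and complex `z ≠ 0`, the absolutely convergent expansion
`((e^z - 1)/z)^n = ∑ₘ (S₂(m+n,n)/C(m+n,n)) z^m/m!` holds. Equivalently, the Bernoulli
numbers of order `-n`, i.e. any sequence `B` of Maclaurin coefficients of `((e^z-1)/z)^n`
(so that `((e^z-1)/z)^n = ∑ₘ B m · z^m/m!`), satisfy `B m = S₂(m+n,n)/C(m+n,n)`. -/
theorem stmt3 (n : ℕ) (hn : 1 ≤ n) :
    (∀ z : ℂ, z ≠ 0 →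
      Summable (fun m : ℕ => ‖((S2 (m + n) n / ((m + n).choose n : ℝ) : ℝ) : ℂ) *
          z ^ m / (m.factorial : ℂ)‖) ∧
      ((Complex.exp z - 1) / z) ^ n =
        ∑' m : ℕ, ((S2 (m + n) n / ((m + n).choose n : ℝ) : ℝ) : ℂ) *
          z ^ m / (m.factorial : ℂ)) ∧
    (∀ B : ℕ → ℂ,
      (∀ z : ℂ, z ≠ 0 →
        HasSum (fun m : ℕ => B m * z ^ m / (m.factorial : ℂ))
          (((Complex.exp z - 1) / z) ^ n)) →
      ∀ m : ℕ, B m = ((S2 (m + n) n / ((m + n).choose n : ℝ) : ℝ) : ℂ)) := by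
  have hterm : ∀ (z : ℂ) (m : ℕ),
      ((S2 (m + n) n / ((m + n).choose n : ℝ) : ℝ) : ℂ) * z ^ m / (m.factorial : ℂ)
        = ((Acoef n (m + n) : ℝ) : ℂ) * z ^ m / ((m + n).factorial : ℂ) := by
    intro z m
    rw [S2_div]
    have h2 : (m.factorial : ℂ) ≠ 0 := Nat.cast_ne_zero.mpr m.factorial_ne_zero
    have h3 : ((m + n).factorial : ℂ) ≠ 0 := Nat.cast_ne_zero.mpr (m + n).factorial_ne_zero
    push_cast
    field_simp
  have hkey : ∀ z : ℂ, z ≠ 0 →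
      HasSum (fun m : ℕ => ((S2 (m + n) n / ((m + n).choose n : ℝ) : ℝ) : ℂ) *
        z ^ m / (m.factorial : ℂ)) (((Complex.exp z - 1) / z) ^ n) := by
    intro z hz
    have := key n z hz
    rwa [show (fun m : ℕ => ((Acoef n (m + n) : ℝ) : ℂ) * z ^ m / ((m + n).factorial : ℂ))
      = (fun m : ℕ => ((S2 (m + n) n / ((m + n).choose n : ℝ) : ℝ) : ℂ) *
        z ^ m / (m.factorial : ℂ)) from funext fun m => (hterm z m).symm] at this
  refine ⟨fun z hz => ⟨?_, ?_⟩, ?_⟩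
  · have := summable_norm_key n z
    rwa [show (fun m : ℕ => ‖((Acoef n (m + n) : ℝ) : ℂ) * z ^ m / ((m + n).factorial : ℂ)‖)
      = (fun m : ℕ => ‖((S2 (m + n) n / ((m + n).choose n : ℝ) : ℝ) : ℂ) *
        z ^ m / (m.factorial : ℂ)‖) from funext fun m => by rw [hterm z m]] at this
  · exact ((hkey z hz).tsum_eq).symm
  · intro B hB m
    have hdiff : ∀ z : ℂ, z ≠ 0 → HasSum (fun k : ℕ =>
        ((B k - ((S2 (k + n) n / ((k + n).choose n : ℝ) : ℝ) : ℂ)) / (k.factorial : ℂ)) * z ^ k)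
        0 := by
      intro z hz
      have h := (hB z hz).sub (hkey z hz)
      rw [sub_self] at h
      rwa [show (fun k : ℕ => B k * z ^ k / (k.factorial : ℂ) -
          ((S2 (k + n) n / ((k + n).choose n : ℝ) : ℝ) : ℂ) * z ^ k / (k.factorial : ℂ))
        = (fun k : ℕ =>
          ((B k - ((S2 (k + n) n / ((k + n).choose n : ℝ) : ℝ) : ℂ)) / (k.factorial : ℂ)) * z ^ k)
        from funext fun k => by ring] at h
    have h0 := coeffs_zero _ hdiff m
    have hfac : (m.factorial : ℂ) ≠ 0 := Nat.cast_ne_zero.mpr m.factorial_ne_zero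
    have := (div_eq_zero_iff.mp h0).resolve_right hfac
    exact sub_eq_zero.mp this
end

section
/- Let α > 1 be real and let f : ℝ → ℂ be a Schwartz function. Then for every x ∈ ℝ the series ∇^α f(x) := ∑_{k=0}^{∞} (-1)^k binom(α,k) f(x-k) converges absolutely, the function ∇^α f is integrable on ℝ, and for every ω ∈ ℝ its Fourier transform satisfies ∫_ℝ (∇^α f)(x) e^{-iωx} dx = ( ∑_{k=0}^{∞} (-1)^k binom(α,k) e^{-ikω} ) · ∫_ℝ f(x) e^{-iωx} dx. -/
/-- The generalized binomial coefficient
`binom(α,k) = α(α-1)⋯(α-k+1)/k!` (with `binom(α,0)=1`). -/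
noncomputable def gbinom (α : ℝ) (k : ℕ) : ℝ :=
  (∏ i ∈ Finset.range k, (α - i)) / (k.factorial : ℝ)

lemma gbinom_succ (α : ℝ) (k : ℕ) :
    gbinom α (k + 1) = gbinom α k * (α - k) / (k + 1) := by
  unfold gbinom
  rw [Finset.prod_range_succ, Nat.factorial_succ]
  have h1 : ((k.factorial : ℝ)) ≠ 0 := Nat.cast_ne_zero.mpr k.factorial_ne_zero
  have h2 : ((k : ℝ) + 1) ≠ 0 := by positivity
  push_cast
  rw [div_mul_eq_mul_div, div_div, mul_comm ((k:ℝ) + 1)]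

lemma summable_abs_gbinom {α : ℝ} (hα : 0 < α) : Summable (fun k => |gbinom α k|) := by
  set t : ℕ → ℝ := fun k => |gbinom α k| with ht
  have h1 : ∀ j : ℕ, α ≤ j → t (j + 1) = t j * ((j - α) / (j + 1)) := by
    intro j hj
    have h2 : ((j:ℝ) + 1) > 0 := by positivity
    rw [ht]
    simp only [gbinom_succ α j]
    rw [abs_div, abs_mul, abs_of_nonneg h2.le, abs_of_nonpos (by linarith : α - (j:ℝ) ≤ 0)]
    ring
  have h2 : ∀ j : ℕ, α ≤ j → t (j + 1) ≤ t j := by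
    intro j hj
    rw [h1 j hj]
    have : (j - α) / ((j:ℝ) + 1) ≤ 1 := by
      rw [div_le_one (by positivity)]; linarith
    nlinarith [abs_nonneg (gbinom α j)]
  set N := ⌈α⌉₊ with hN
  have hNα : α ≤ N := Nat.le_ceil α
  have key : ∀ M : ℕ, α * (∑ k ∈ Finset.range M, t (N + k)) + ((N:ℝ) + M + 1) * t (N + M)
      ≤ ((N:ℝ) + 1) * t N := by
    intro M
    induction M with
    | zero => simp
    | succ M ih =>
      have hjα : α ≤ (N + M : ℕ) := by push_cast; linarith [Nat.cast_nonneg (α := ℝ) M]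
      have e1 : ((N + M : ℕ):ℝ) + 1 = (N:ℝ) + M + 1 := by push_cast; ring
      have step : ((N:ℝ) + (M+1) + 1) * t (N + (M+1)) ≤ ((N:ℝ) + M + 1) * t (N + M) - α * t (N + M) := by
        have hrec := h1 (N + M) hjα
        have hle := h2 (N + M) hjα
        have ht0 : 0 ≤ t (N + M) := abs_nonneg _
        have ht1 : 0 ≤ t (N + M + 1) := abs_nonneg _
        have : t (N + M + 1) = t (N + M) * (((N:ℝ) + M - α) / ((N:ℝ) + M + 1)) := by
          rw [hrec]; push_cast; ring_nf
        have hpos : (0:ℝ) < (N:ℝ) + M + 1 := by positivity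
        have hmul : ((N:ℝ) + M + 1) * t (N + M + 1) = ((N:ℝ) + M - α) * t (N + M) := by
          rw [this]; field_simp
        have : N + (M + 1) = (N + M) + 1 := by ring
        rw [this]
        push_cast
        nlinarith
      rw [Finset.sum_range_succ]
      push_cast at step ⊢
      nlinarith
  have hbound : ∀ M : ℕ, (∑ k ∈ Finset.range M, t (N + k)) ≤ ((N:ℝ) + 1) * t N / α := by
    intro M
    have := key M
    have ht0 : 0 ≤ t (N + M) := abs_nonneg _
    have hNM : (0:ℝ) ≤ ((N:ℝ) + M + 1) * t (N + M) := by positivity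
    rw [le_div_iff₀ hα]
    nlinarith
  have hsum : Summable (fun k => t (N + k)) :=
    summable_of_sum_range_le (fun n => abs_nonneg _) hbound
  have : Summable (fun k => t (k + N)) := by
    simpa [add_comm] using hsum
  exact (summable_nat_add_iff N).mp this

/-- For real `α > 1` and a Schwartz function `f`, the fractional forward difference
`∇^α f(x) = ∑ₖ (-1)^k binom(α,k) f(x-k)` converges absolutely at every `x`, defines an
integrable function, and its Fourier transform satisfies
`∫ (∇^α f)(x) e^{-iωx} dx = (∑ₖ (-1)^k binom(α,k) e^{-ikω}) ∫ f(x) e^{-iωx} dx`. -/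
theorem stmt6 (α : ℝ) (hα : 1 < α) (f : SchwartzMap ℝ ℂ) :
    (∀ x : ℝ, Summable (fun k : ℕ =>
      ‖(-1 : ℂ) ^ k * (gbinom α k : ℂ) * f (x - k)‖)) ∧
    MeasureTheory.Integrable
      (fun x : ℝ => ∑' k : ℕ, (-1 : ℂ) ^ k * (gbinom α k : ℂ) * f (x - k)) ∧
    ∀ ω : ℝ,
      ∫ x : ℝ, (∑' k : ℕ, (-1 : ℂ) ^ k * (gbinom α k : ℂ) * f (x - k)) *
          Complex.exp (-(Complex.I * ω * x)) =
        (∑' k : ℕ, (-1 : ℂ) ^ k * (gbinom α k : ℂ) *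
            Complex.exp (-(Complex.I * k * ω))) *
          ∫ x : ℝ, f x * Complex.exp (-(Complex.I * ω * x)) := by
  have hgb : Summable (fun k => |gbinom α k|) := summable_abs_gbinom (by linarith)
  set c : ℕ → ℂ := fun k => (-1 : ℂ) ^ k * (gbinom α k : ℂ) with hc
  set F : ℕ → ℝ → ℂ := fun k x => c k * f (x - k) with hF
  have hcnorm : ∀ k, ‖c k‖ = |gbinom α k| := by
    intro k
    simp [hc, norm_mul, Real.norm_eq_abs]
  have hFnorm : ∀ k x, ‖F k x‖ = |gbinom α k| * ‖f (x - (k:ℝ))‖ := by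
    intro k x
    rw [hF]; simp only [norm_mul, hcnorm]
  set C : ℝ := SchwartzMap.seminorm ℝ 0 0 f with hC
  have hfC : ∀ y : ℝ, ‖f y‖ ≤ C := fun y => SchwartzMap.norm_le_seminorm ℝ f y
  have hC0 : 0 ≤ C := le_trans (norm_nonneg _) (hfC 0)
  -- part 1
  have part1 : ∀ x : ℝ, Summable (fun k : ℕ => ‖F k x‖) := by
    intro x
    apply Summable.of_nonneg_of_le (fun k => norm_nonneg _) (fun k => ?_) (hgb.mul_right C)
    rw [hFnorm]
    exact mul_le_mul_of_nonneg_left (hfC _) (abs_nonneg _)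
  -- integrability of each term
  have hfi : MeasureTheory.Integrable (fun x : ℝ => f x) := f.integrable
  have hFi : ∀ k, MeasureTheory.Integrable (F k) := by
    intro k
    exact (hfi.comp_sub_right (k:ℝ)).const_mul (c k)
  have hInt : ∀ k, ∫ x : ℝ, ‖F k x‖ = |gbinom α k| * ∫ x : ℝ, ‖f x‖ := by
    intro k
    simp_rw [hFnorm k]
    rw [MeasureTheory.integral_const_mul]
    congr 1
    exact MeasureTheory.integral_sub_right_eq_self (fun y => ‖f y‖) (k:ℝ)
  have hIsum : Summable (fun k => ∫ x : ℝ, ‖F k x‖) := by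
    simp_rw [hInt]
    exact hgb.mul_right _
  -- continuity of the tsum
  have hFcont : ∀ k, Continuous (F k) := by
    intro k
    exact continuous_const.mul (f.continuous.comp (continuous_id.sub continuous_const))
  have hgcont : Continuous (fun x : ℝ => ∑' k, F k x) := by
    apply continuous_tsum hFcont (hgb.mul_right C)
    intro k x
    rw [hFnorm]
    exact mul_le_mul_of_nonneg_left (hfC _) (abs_nonneg _)
  -- part 2
  have part2 : MeasureTheory.Integrable (fun x : ℝ => ∑' k, F k x) := by
    constructor
    · exact hgcont.aestronglyMeasurable
    · rw [MeasureTheory.hasFiniteIntegral_def]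
      calc ∫⁻ x, ‖∑' k, F k x‖₊ ≤ ∫⁻ x, ∑' k, (‖F k x‖₊ : ENNReal) := by
            apply MeasureTheory.lintegral_mono
            intro x
            have hs : Summable (fun k => ‖F k x‖₊) :=
              NNReal.summable_coe.mp (by simpa using part1 x)
            show (‖∑' k, F k x‖₊ : ENNReal) ≤ ∑' k, (‖F k x‖₊ : ENNReal)
            rw [← ENNReal.coe_tsum hs]
            exact ENNReal.coe_le_coe.mpr (nnnorm_tsum_le hs)
        _ = ∑' k, ∫⁻ x, ‖F k x‖₊ :=
            MeasureTheory.lintegral_tsum (fun k => (hFi k).aestronglyMeasurable.enorm)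
        _ < ⊤ := by
            have : ∀ k, ∫⁻ x, (‖F k x‖₊ : ENNReal) = ENNReal.ofReal (∫ x : ℝ, ‖F k x‖) :=
              fun k => (MeasureTheory.ofReal_integral_norm_eq_lintegral_enorm (hFi k)).symm
            simp_rw [this]
            rw [← ENNReal.ofReal_tsum_of_nonneg
              (fun k => MeasureTheory.integral_nonneg (fun x => norm_nonneg _)) hIsum]
            exact ENNReal.ofReal_lt_top
  refine ⟨part1, part2, ?_⟩
  -- part 3
  intro ω
  set e : ℝ → ℂ := fun x => Complex.exp (-(Complex.I * ω * x)) with he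
  have henorm : ∀ x : ℝ, ‖e x‖ = 1 := by
    intro x
    rw [he]
    simp [Complex.norm_exp]
  set G : ℕ → ℝ → ℂ := fun k x => F k x * e x with hG
  have hGnorm : ∀ k x, ‖G k x‖ = ‖F k x‖ := by
    intro k x; rw [hG]; simp only [norm_mul, henorm, mul_one]
  have hGi : ∀ k, MeasureTheory.Integrable (G k) := by
    intro k
    refine MeasureTheory.Integrable.mono' (hFi k).norm ?_ ?_
    · exact ((hFcont k).mul (by fun_prop)).aestronglyMeasurable
    · exact Filter.Eventually.of_forall (fun x => le_of_eq (hGnorm k x))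
  have hGsum : Summable (fun k => ∫ x : ℝ, ‖G k x‖) := by
    simp_rw [hGnorm]; exact hIsum
  have key : ∫ x : ℝ, (∑' k, F k x) * e x = ∑' k, ∫ x : ℝ, G k x := by
    rw [MeasureTheory.integral_tsum_of_summable_integral_norm hGi hGsum]
    refine MeasureTheory.integral_congr_ae (Filter.Eventually.of_forall (fun x => ?_))
    exact (tsum_mul_right).symm
  have hGval : ∀ k, ∫ x : ℝ, G k x =
      (c k * Complex.exp (-(Complex.I * k * ω))) * ∫ x : ℝ, f x * e x := by
    intro k
    have shift : ∫ x : ℝ, f (x - (k:ℝ)) * e x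
        = ∫ y : ℝ, f y * Complex.exp (-(Complex.I * ω * (y + (k:ℝ)))) := by
      rw [← MeasureTheory.integral_sub_right_eq_self
        (fun y => f y * Complex.exp (-(Complex.I * ω * (y + (k:ℝ))))) (k:ℝ)]
      congr 1
      ext x
      rw [he]
      norm_num
    have split : ∀ y : ℝ, f y * Complex.exp (-(Complex.I * ω * (y + (k:ℝ))))
        = Complex.exp (-(Complex.I * k * ω)) * (f y * e y) := by
      intro y
      have hee : Complex.exp (-(Complex.I * ω * (y + (k:ℝ))))
          = Complex.exp (-(Complex.I * k * ω)) * Complex.exp (-(Complex.I * ω * y)) := by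
        rw [← Complex.exp_add]
        congr 1
        push_cast
        ring
      simp only [he]
      rw [hee]
      ring
    calc ∫ x : ℝ, G k x = ∫ x : ℝ, c k * (f (x - (k:ℝ)) * e x) := by
          refine MeasureTheory.integral_congr_ae (Filter.Eventually.of_forall (fun x => ?_))
          simp only [hG, hF]; ring
      _ = c k * ∫ x : ℝ, f (x - (k:ℝ)) * e x := MeasureTheory.integral_const_mul _ _
      _ = c k * ∫ y : ℝ, Complex.exp (-(Complex.I * k * ω)) * (f y * e y) := by
          rw [shift]
          congr 1
          exact MeasureTheory.integral_congr_ae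
            (Filter.Eventually.of_forall (fun y => split y))
      _ = (c k * Complex.exp (-(Complex.I * k * ω))) * ∫ x : ℝ, f x * e x := by
          rw [MeasureTheory.integral_const_mul]; ring
  rw [key]
  simp_rw [hGval]
  rw [tsum_mul_right]
end

section
/- Let α > 0 be real, x ∈ ℝ, and t ∈ ℝ. Then the ordinary generating function of the fractional spline polynomials satisfies ∑_{n=0}^{∞} S_n^{(α)}(x) tⁿ = ∑_{k=0}^{∞} (-1)^k binom(α+1,k) (x-k)₊^{α} · E_{1,α+1}( (x-k)₊ · t ), where both series converge (the n-series converges absolutely for every t, and the k-series has only finitely many nonzero terms, namely those with k < x). -/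
/-- The truncated power `x₊^β = x^β` if `x > 0` and `0` otherwise. -/
noncomputable def tpow (x β : ℝ) : ℝ := if 0 < x then x ^ β else 0

/-- The fractional spline polynomials
`Sₙ^{(α)}(x) = (1/Γ(α+n+1)) ∑ₖ (-1)^k binom(α+1,k) (x-k)₊^{α+n}`
(only finitely many terms are nonzero). -/
noncomputable def fracSplinePoly (α : ℝ) (n : ℕ) (x : ℝ) : ℝ :=
  (1 / Real.Gamma (α + n + 1)) *
    ∑' k : ℕ, (-1 : ℝ) ^ k * gbinom (α + 1) k * tpow (x - k) (α + n)

/-- The Mittag–Leffler function `E_{1,β}(z) = ∑ₙ zⁿ/Γ(n+β)`. -/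
noncomputable def mittagLeffler (β z : ℝ) : ℝ :=
  ∑' n : ℕ, z ^ n / Real.Gamma (n + β)

lemma gamma_fact_le (α : ℝ) (hα : 0 < α) :
    ∀ n : ℕ, Real.Gamma (α + 1) * n.factorial ≤ Real.Gamma (α + n + 1) := by
  intro n
  induction n with
  | zero => simp
  | succ n ih =>
    have hpos : (0:ℝ) < α + n + 1 := by positivity
    have h1 : Real.Gamma (α + ((n:ℕ)+1 : ℕ) + 1) = (α + n + 1) * Real.Gamma (α + n + 1) := by
      rw [show α + (((n:ℕ)+1 : ℕ) : ℝ) + 1 = (α + (n:ℝ) + 1) + 1 by push_cast; ring,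
        Real.Gamma_add_one (ne_of_gt hpos)]
    rw [h1]
    have hfac : (Nat.factorial (n+1) : ℝ) = ((n:ℝ)+1) * n.factorial := by
      push_cast [Nat.factorial_succ]; ring
    have hG1 : 0 < Real.Gamma (α + 1) := Real.Gamma_pos_of_pos (by linarith)
    have hGn : 0 < Real.Gamma (α + n + 1) := Real.Gamma_pos_of_pos hpos
    calc Real.Gamma (α+1) * (Nat.factorial (n+1) : ℝ)
        = ((n:ℝ)+1) * (Real.Gamma (α+1) * n.factorial) := by rw [hfac]; ring
      _ ≤ ((n:ℝ)+1) * Real.Gamma (α + n + 1) :=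
          mul_le_mul_of_nonneg_left ih (by positivity)
      _ ≤ (α + n + 1) * Real.Gamma (α + n + 1) :=
          mul_le_mul_of_nonneg_right (by linarith) hGn.le

lemma summable_ml_abs (α : ℝ) (hα : 0 < α) (r : ℝ) :
    Summable (fun n : ℕ => |r ^ n / Real.Gamma (α + n + 1)|) := by
  have hG1 : 0 < Real.Gamma (α + 1) := Real.Gamma_pos_of_pos (by linarith)
  have hmaj : Summable (fun n : ℕ => (Real.Gamma (α+1))⁻¹ * (|r| ^ n / n.factorial)) :=
    (Real.summable_pow_div_factorial |r|).mul_left _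
  apply Summable.of_nonneg_of_le (fun n => abs_nonneg _) _ hmaj
  intro n
  have hGn : 0 < Real.Gamma (α + n + 1) := Real.Gamma_pos_of_pos (by positivity)
  have hle := gamma_fact_le α hα n
  have hfacpos : (0:ℝ) < n.factorial := by positivity
  rw [abs_div, abs_pow, abs_of_pos hGn]
  rw [div_le_iff₀ hGn]
  have h2 : (Real.Gamma (α+1))⁻¹ * (|r| ^ n / (n.factorial:ℝ)) * Real.Gamma (α + n + 1)
      = |r| ^ n * (Real.Gamma (α + n + 1) / (Real.Gamma (α+1) * n.factorial)) := by
    field_simp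
  rw [h2]
  nth_rewrite 1 [← mul_one (|r| ^ n)]
  exact mul_le_mul_of_nonneg_left ((one_le_div (by positivity)).2 hle)
    (pow_nonneg (abs_nonneg r) n)


/-- For real `α > 0`, `x, t ∈ ℝ`, the ordinary generating function of the fractional
spline polynomials satisfies
`∑ₙ Sₙ^{(α)}(x) tⁿ = ∑ₖ (-1)^k binom(α+1,k) (x-k)₊^α E_{1,α+1}((x-k)₊ t)`,
where the `n`-series converges absolutely and the `k`-series has only finitely many
nonzero terms, namely (at most) those with `k < x`. -/
theorem stmt11 (α : ℝ) (hα : 0 < α) (x t : ℝ) :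
    Summable (fun n : ℕ => |fracSplinePoly α n x * t ^ n|) ∧
    {k : ℕ | (-1 : ℝ) ^ k * gbinom (α + 1) k * tpow (x - k) α *
        mittagLeffler (α + 1) (max (x - k) 0 * t) ≠ 0} ⊆ {k : ℕ | (k : ℝ) < x} ∧
    {k : ℕ | (-1 : ℝ) ^ k * gbinom (α + 1) k * tpow (x - k) α *
        mittagLeffler (α + 1) (max (x - k) 0 * t) ≠ 0}.Finite ∧
    ∑' n : ℕ, fracSplinePoly α n x * t ^ n =
      ∑' k : ℕ, (-1 : ℝ) ^ k * gbinom (α + 1) k * tpow (x - k) α *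
        mittagLeffler (α + 1) (max (x - k) 0 * t) := by
  set N := ⌈x⌉₊ with hN
  set c : ℕ → ℝ := fun k => (-1 : ℝ) ^ k * gbinom (α + 1) k with hc
  set f : ℕ → ℕ → ℝ := fun k n =>
    (1 / Real.Gamma (α + n + 1)) * (c k * tpow (x - k) (α + n)) * t ^ n with hf
  -- k ∉ range N → x - k ≤ 0
  have hout : ∀ k : ℕ, k ∉ Finset.range N → ¬ (0 < x - (k:ℝ)) := by
    intro k hk
    simp only [Finset.mem_range, hN, Nat.lt_ceil, not_lt] at hk
    linarith
  have hin : ∀ k : ℕ, k ∈ Finset.range N → 0 < x - (k:ℝ) := by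
    intro k hk
    simp only [Finset.mem_range, hN, Nat.lt_ceil] at hk
    linarith
  -- term rewriting of fracSplinePoly as finite sum
  have hterm : ∀ n : ℕ, fracSplinePoly α n x * t ^ n = ∑ k ∈ Finset.range N, f k n := by
    intro n
    rw [fracSplinePoly]
    have h1 : ∑' k : ℕ, (-1 : ℝ) ^ k * gbinom (α + 1) k * tpow (x - k) (α + n)
        = ∑ k ∈ Finset.range N, c k * tpow (x - k) (α + n) := by
      rw [tsum_eq_sum (s := Finset.range N)]
      intro k hk
      simp [tpow, hout k hk]
    rw [h1, Finset.mul_sum, Finset.sum_mul]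
  -- inner summability and value for k ∈ range N
  have hfk : ∀ k ∈ Finset.range N, ∀ n : ℕ,
      f k n = c k * (x - k) ^ α * ((x - (k:ℝ)) * t) ^ n / Real.Gamma (α + n + 1) := by
    intro k hk n
    have hy := hin k hk
    simp only [hf, tpow, if_pos hy]
    rw [show (x - (k:ℝ)) ^ (α + (n:ℝ)) = (x - k) ^ α * (x - (k:ℝ)) ^ (n:ℕ) by
      rw [Real.rpow_add hy, Real.rpow_natCast]]
    rw [mul_pow]
    ring
  have hsum_k : ∀ k ∈ Finset.range N, Summable (f k) := by
    intro k hk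
    have : Summable (fun n : ℕ => c k * (x - k) ^ α *
        (((x - (k:ℝ)) * t) ^ n / Real.Gamma (α + n + 1))) :=
      (((summable_ml_abs α hα ((x - (k:ℝ)) * t)).of_abs).mul_left _)
    apply this.congr
    intro n
    rw [hfk k hk n]
    ring
  have htsum_k : ∀ k ∈ Finset.range N,
      ∑' n : ℕ, f k n = c k * tpow (x - k) α *
        mittagLeffler (α + 1) (max (x - k) 0 * t) := by
    intro k hk
    have hy := hin k hk
    have hmax : max (x - (k:ℝ)) 0 = x - k := max_eq_left hy.le
    have hml : mittagLeffler (α + 1) ((x - (k:ℝ)) * t)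
        = ∑' n : ℕ, ((x - (k:ℝ)) * t) ^ n / Real.Gamma (α + n + 1) := by
      rw [mittagLeffler]
      apply tsum_congr
      intro n
      congr 2
      ring
    rw [hmax, hml, ← tsum_mul_left]
    apply tsum_congr
    intro n
    rw [hfk k hk n, tpow, if_pos hy]
    ring
  -- part 1 : summability in n
  have habs : Summable (fun n : ℕ => |fracSplinePoly α n x * t ^ n|) := by
    exact Summable.of_nonneg_of_le (fun n => abs_nonneg _)
      (fun n => by rw [hterm n]; exact Finset.abs_sum_le_sum_abs _ _)
      (summable_sum (fun k hk => (hsum_k k hk).abs))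
  refine ⟨habs, ?_, ?_, ?_⟩
  · intro k hk
    simp only [Set.mem_setOf_eq] at hk ⊢
    by_contra hlt
    apply hk
    have : tpow (x - (k:ℝ)) α = 0 := by
      rw [tpow, if_neg (by push_neg at hlt ⊢; linarith)]
    rw [this]; ring
  · apply Set.Finite.subset (Finset.range N).finite_toSet
    intro k hk
    simp only [Set.mem_setOf_eq] at hk
    simp only [Finset.coe_range, Set.mem_Iio, hN, Nat.lt_ceil]
    by_contra hlt
    apply hk
    have : tpow (x - (k:ℝ)) α = 0 := by
      rw [tpow, if_neg (by push_neg at hlt ⊢; linarith)]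
    rw [this]; ring
  · rw [tsum_congr hterm, Summable.tsum_finsetSum (fun k hk => hsum_k k hk)]
    rw [tsum_eq_sum (s := Finset.range N) (f := fun k : ℕ =>
      (-1 : ℝ) ^ k * gbinom (α + 1) k * tpow (x - k) α *
        mittagLeffler (α + 1) (max (x - k) 0 * t))]
    · exact Finset.sum_congr rfl (fun k hk => htsum_k k hk)
    · intro k hk
      have : tpow (x - (k:ℝ)) α = 0 := by rw [tpow, if_neg (hout k hk)]
      rw [this]; ring
end
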